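/- Given a 3-CNF formula φ with variable set X, construct the encoding graph G(φ): for each clause C_j add a clause voter v_{C_j} and two dummy voters d_{C_j}, d'_{C_j}, with edges v_{C_j} → d_{C_j}, v_{C_j} → d'_{C_j}; add edge d_{C_j} → (first literal voter of C_j) and edges d'_{C_j} → (second and third literal voters of C_j); for each variable x add literal voters v_x, v_{¬x} with edges v_x → v_{¬x} and v_{¬x} → v_x. All voting costs are 1, delegating costs are 0. Then φ is satisfiable if and only if there is a feasible solution (C, D) with |C| ≤ |X| (total cost ≤ |X|) such that every vertex not in C has a D-path of length at most 2 to a vertex in C. -/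
import Mathlib


/-- Voters of the encoding of a 3-CNF formula with variables `X` and `n`
clauses: literal voters `lit x b`, clause voters `clause j`, and the two
clause-dummy voters `dum j false` (= d_{C_j}) and `dum j true` (= d'_{C_j}). -/
inductive Vtx (X : Type) (n : ℕ) where
  | lit : X → Bool → Vtx X n
  | clause : Fin n → Vtx X n
  | dum : Fin n → Bool → Vtx X n
deriving DecidableEq

/-- A 3-CNF formula over `X` with `n` clauses: each clause is a triple of
literals, a literal being a variable together with a polarity. -/
abbrev Cnf (X : Type) (n : ℕ) := Fin n → (X × Bool) × ((X × Bool) × (X × Bool))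

/-- A literal `(x, b)` is true under assignment `σ` iff `σ x = b`. -/
def litval {X : Type} (σ : X → Bool) (L : X × Bool) : Prop := σ L.1 = L.2

/-- Edges of the encoding graph: each clause voter points to its two dummies,
the first dummy points to the clause's first literal voter, the second dummy
points to the second and third literal voters, and complementary literal
voters point to each other. -/
inductive Edge {X : Type} {n : ℕ} (φ : Cnf X n) : Vtx X n → Vtx X n → Prop
  | cd (j : Fin n) (b : Bool) : Edge φ (.clause j) (.dum j b)
  | d1 (j : Fin n) : Edge φ (.dum j false) (.lit (φ j).1.1 (φ j).1.2)
  | d2 (j : Fin n) : Edge φ (.dum j true) (.lit (φ j).2.1.1 (φ j).2.1.2)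
  | d3 (j : Fin n) : Edge φ (.dum j true) (.lit (φ j).2.2.1 (φ j).2.2.2)
  | flip (x : X) (b : Bool) : Edge φ (.lit x b) (.lit x (!b))

/-- `reachLe Dn Cs ℓ a`: from `a` one reaches a vertex of `Cs` along selected
delegation edges in at most `ℓ` steps. -/
def reachLe {α : Type} [DecidableEq α] (Dn : α → Option α) (Cs : Finset α) :
    ℕ → α → Prop
  | 0, a => a ∈ Cs
  | ℓ + 1, a => a ∈ Cs ∨ ∃ b, Dn a = some b ∧ reachLe Dn Cs ℓ b

lemma reachLe_two {α : Type} [DecidableEq α] (Dn : α → Option α) (Cs : Finset α)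
    (a : α) : reachLe Dn Cs 2 a ↔
      a ∈ Cs ∨ ∃ b, Dn a = some b ∧ (b ∈ Cs ∨ ∃ c, Dn b = some c ∧ c ∈ Cs) := by
  show reachLe Dn Cs (1+1) a ↔ _
  simp [reachLe]

/-- A 3-CNF formula `φ` is satisfiable iff its encoding admits a feasible
solution of cost at most `|X|` (all voting costs are 1 and delegating costs 0,
so the cost is `|C|`) in which every non-casting voter has a delegation path of
length at most 2 to a casting voter. -/
theorem sat_iff_bounded_max_length {X : Type} [Fintype X] [DecidableEq X] {n : ℕ}
    (φ : Cnf X n) :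
    (∃ σ : X → Bool, ∀ j : Fin n,
      litval σ (φ j).1 ∨ litval σ (φ j).2.1 ∨ litval σ (φ j).2.2) ↔
    (∃ (C : Finset (Vtx X n)) (Dn : Vtx X n → Option (Vtx X n)),
      (∀ i, Dn i = none ↔ i ∈ C) ∧
      (∀ i j, Dn i = some j → Edge φ i j) ∧
      (∀ i : Vtx X n, reachLe Dn C 2 i) ∧
      C.card ≤ Fintype.card X) := by
  constructor
  · rintro ⟨σ, hσ⟩
    refine ⟨Finset.univ.image (fun x => Vtx.lit x (σ x)),
      (fun v => match v with
        | .lit x b => if σ x = b then none else some (.lit x (!b))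
        | .clause j => some (.dum j (if σ (φ j).1.1 = (φ j).1.2 then false else true))
        | .dum j false => some (.lit (φ j).1.1 (φ j).1.2)
        | .dum j true => if σ (φ j).2.1.1 = (φ j).2.1.2
            then some (.lit (φ j).2.1.1 (φ j).2.1.2)
            else some (.lit (φ j).2.2.1 (φ j).2.2.2)),
      ?_, ?_, ?_, ?_⟩
    · intro i
      cases i with
      | lit x b =>
        by_cases hb : σ x = b <;>
          simp [hb, Finset.mem_image]
      | clause j => simp [Finset.mem_image]
      | dum j b =>
        cases b
        · simp [Finset.mem_image]
        · by_cases h2 : σ (φ j).2.1.1 = (φ j).2.1.2 <;>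
            simp [h2, Finset.mem_image]
    · intro i w h
      cases i with
      | lit x b =>
        by_cases hb : σ x = b
        · simp [hb] at h
        · simp only [hb, if_false] at h
          obtain rfl := Option.some.inj h
          exact Edge.flip x b
      | clause j =>
        obtain rfl := Option.some.inj h
        exact Edge.cd j _
      | dum j b =>
        cases b with
        | false =>
          obtain rfl := Option.some.inj h
          exact Edge.d1 j
        | true =>
          by_cases h2 : σ (φ j).2.1.1 = (φ j).2.1.2
          · simp only [h2, if_true] at h
            obtain rfl := Option.some.inj h
            exact Edge.d2 j
          · simp only [h2, if_false] at h
            obtain rfl := Option.some.inj h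
            exact Edge.d3 j
    · have hmem : ∀ x b, Vtx.lit x b ∈
          Finset.univ.image (fun x => (Vtx.lit x (σ x) : Vtx X n)) ↔ σ x = b := by
        intro x b
        simp only [Finset.mem_image, Finset.mem_univ, true_and, Vtx.lit.injEq]
        constructor
        · rintro ⟨a, rfl, rfl⟩; rfl
        · rintro rfl; exact ⟨x, rfl, rfl⟩
      have hlit1 : ∀ x b, (Vtx.lit x b ∈
            Finset.univ.image (fun x => (Vtx.lit x (σ x) : Vtx X n))) ∨
          ∃ c, (if σ x = b then none else some (Vtx.lit x (!b))) = some c ∧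
            c ∈ Finset.univ.image (fun x => (Vtx.lit x (σ x) : Vtx X n)) := by
        intro x b
        by_cases hb : σ x = b
        · exact Or.inl ((hmem x b).2 hb)
        · refine Or.inr ⟨Vtx.lit x (!b), by simp [hb], (hmem x (!b)).2 ?_⟩
          cases b <;> simp_all
      intro i
      rw [reachLe_two]
      cases i with
      | lit x b =>
        rcases hlit1 x b with h | ⟨c, hc, hcm⟩
        · exact Or.inl h
        · exact Or.inr ⟨c, hc, Or.inl hcm⟩
      | dum j b =>
        cases b with
        | false => exact Or.inr ⟨_, rfl, hlit1 (φ j).1.1 (φ j).1.2⟩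
        | true =>
          by_cases h2 : σ (φ j).2.1.1 = (φ j).2.1.2
          · exact Or.inr ⟨_, by simp [h2], hlit1 (φ j).2.1.1 (φ j).2.1.2⟩
          · exact Or.inr ⟨_, by simp [h2], hlit1 (φ j).2.2.1 (φ j).2.2.2⟩
      | clause j =>
        by_cases h1 : σ (φ j).1.1 = (φ j).1.2
        · refine Or.inr ⟨Vtx.dum j false, by simp [h1], Or.inr ⟨_, rfl, ?_⟩⟩
          exact (hmem _ _).2 h1
        · refine Or.inr ⟨Vtx.dum j true, by simp [h1], Or.inr ?_⟩
          by_cases h2 : σ (φ j).2.1.1 = (φ j).2.1.2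
          · exact ⟨Vtx.lit (φ j).2.1.1 (φ j).2.1.2, by simp [h2], (hmem _ _).2 h2⟩
          · refine ⟨Vtx.lit (φ j).2.2.1 (φ j).2.2.2, by simp [h2], (hmem _ _).2 ?_⟩
            rcases hσ j with h | h | h
            · exact absurd h h1
            · exact absurd h h2
            · exact h
    · exact le_trans Finset.card_image_le (le_of_eq Finset.card_univ)
  · rintro ⟨C, Dn, hnone, hedge, hreach, hcard⟩
    have hex : ∀ x : X, ∃ b, Vtx.lit x b ∈ C := by
      intro x
      rcases (reachLe_two Dn C _).1 (hreach (Vtx.lit x true)) with h | ⟨w, hw, h1⟩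
      · exact ⟨true, h⟩
      · cases hedge _ _ hw with
        | flip =>
          rcases h1 with h | ⟨u, hu, h0⟩
          · exact ⟨false, h⟩
          · cases hedge _ _ hu with
            | flip => exact ⟨_, h0⟩
    set σ : X → Bool := fun x => decide (Vtx.lit x true ∈ C) with hσdef
    have hσmem : ∀ x, Vtx.lit x (σ x) ∈ C := by
      intro x
      by_cases h : Vtx.lit x true ∈ C
      · simp [hσdef, h]
      · rcases hex x with ⟨b, hb⟩
        cases b
        · simpa [hσdef, h] using hb
        · exact absurd hb h
    have hginj : Function.Injective (fun x => (Vtx.lit x (σ x) : Vtx X n)) := by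
      intro a b hab
      simpa using (Vtx.lit.injEq _ _ _ _ ▸ congrArg id hab).1
    have himg : Finset.univ.image (fun x => Vtx.lit x (σ x)) ⊆ C := by
      intro v hv
      simp only [Finset.mem_image, Finset.mem_univ, true_and] at hv
      obtain ⟨a, rfl⟩ := hv
      exact hσmem a
    have hCeq : Finset.univ.image (fun x => Vtx.lit x (σ x)) = C :=
      Finset.eq_of_subset_of_card_le himg
        (by rwa [Finset.card_image_of_injective _ hginj, Finset.card_univ])
    have hlitC : ∀ x b, Vtx.lit x b ∈ C → σ x = b := by
      intro x b h
      rw [← hCeq] at h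
      simp only [Finset.mem_image, Finset.mem_univ, true_and, Vtx.lit.injEq] at h
      obtain ⟨a, rfl, rfl⟩ := h
      rfl
    refine ⟨σ, fun j => ?_⟩
    rcases (reachLe_two Dn C _).1 (hreach (Vtx.clause j)) with h | ⟨w, hw, h1⟩
    · exfalso
      rw [← hCeq] at h
      simp [Finset.mem_image] at h
    · cases hedge _ _ hw with
      | cd _ b =>
        rcases h1 with h | ⟨u, hu, h0⟩
        · exfalso
          rw [← hCeq] at h
          simp [Finset.mem_image] at h
        · cases hedge _ _ hu with
          | d1 => exact Or.inl (hlitC _ _ h0)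
          | d2 => exact Or.inr (Or.inl (hlitC _ _ h0))
          | d3 => exact Or.inr (Or.inr (hlitC _ _ h0))
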